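/- arXiv:2306.05028 — 10 statements merged into one kernel-verified Lean document; each statement's English description precedes it below -/
import Mathlib

section
/- For every belief profile b ∈ (0,1)^n there exists a naive competitive equilibrium, i.e., there exist vectors s^A, s^B ∈ [0,1]^n with s_i^A · s_i^B = 0 for every i, and a price p ∈ (0,1), such that (1/p)·∑_{i=1}^n s_i^A = (1/(1−p))·∑_{i=1}^n s_i^B, and for every i: if b_i > p then s_i^A = 1 and s_i^B = 0, and if b_i < p then s_i^A = 0 and s_i^B = 1. -/
/-- `(sA, sB)` together with price `p` is a naive competitive equilibrium for
the belief profile `b`: admissible investments, market clearing, and every agent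
whose belief differs from the price invests her whole endowment on the side of
her belief. -/
def NaiveEquilibrium (n : ℕ) (b sA sB : Fin n → ℝ) (p : ℝ) : Prop :=
  p ∈ Set.Ioo (0 : ℝ) 1 ∧
  (∀ i, sA i ∈ Set.Icc (0 : ℝ) 1 ∧ sB i ∈ Set.Icc (0 : ℝ) 1 ∧ sA i * sB i = 0) ∧
  (1 / p) * (∑ i, sA i) = (1 / (1 - p)) * (∑ i, sB i) ∧
  (∀ i, b i > p → sA i = 1 ∧ sB i = 0) ∧
  (∀ i, b i < p → sA i = 0 ∧ sB i = 1)

open Finset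

lemma sum_ind {n : ℕ} (P : Fin n → Prop) [DecidablePred P] (x : ℝ) :
    ∑ i, (if P i then x else 0) = ((univ.filter P).card : ℝ) * x := by
  rw [← Finset.sum_filter, Finset.sum_const, nsmul_eq_mul]

lemma tie_equilibrium (n : ℕ) (b : Fin n → ℝ) (p : ℝ) (hp0 : 0 < p) (hp1 : p < 1)
    (h1 : p * n ≤ ((univ.filter (fun i => p ≤ b i)).card : ℝ))
    (h2 : ((univ.filter (fun i => p < b i)).card : ℝ) ≤ p * n) :
    ∃ sA sB : Fin n → ℝ, NaiveEquilibrium n b sA sB p := by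
  classical
  set A := (univ.filter (fun i : Fin n => p < b i)).card with hA
  set B := (univ.filter (fun i : Fin n => b i < p)).card with hB
  set T := (univ.filter (fun i : Fin n => b i = p)).card with hT
  have h1p : (0:ℝ) < 1 - p := by linarith
  -- counting identities
  have hAT : (univ.filter (fun i : Fin n => p ≤ b i)).card = A + T := by
    have hset : univ.filter (fun i : Fin n => p ≤ b i)
        = univ.filter (fun i : Fin n => p < b i) ∪ univ.filter (fun i : Fin n => b i = p) := by
      rw [← Finset.filter_or]
      apply Finset.filter_congr
      intro i _
      constructor
      · intro h; rcases lt_or_eq_of_le h with h' | h'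
        · exact Or.inl h'
        · exact Or.inr h'.symm
      · rintro (h | h)
        · exact le_of_lt h
        · exact le_of_eq h.symm
    rw [hset, Finset.card_union_of_disjoint]
    rw [Finset.disjoint_filter]
    intro i _ hi hi'
    exact absurd hi' (ne_of_gt hi)
  have hBn : B + (A + T) = n := by
    rw [← hAT]
    have := Finset.card_filter_add_card_filter_not
      (s := (univ : Finset (Fin n))) (p := fun i => b i < p)
    simpa [not_lt, Finset.card_univ] using this
  have hABT : A + (B + T) = n := by
    have hset : univ.filter (fun i : Fin n => ¬ p < b i)
        = univ.filter (fun i : Fin n => b i < p) ∪ univ.filter (fun i : Fin n => b i = p) := by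
      rw [← Finset.filter_or]
      apply Finset.filter_congr
      intro i _
      simp only [not_lt]
      constructor
      · intro h; rcases lt_or_eq_of_le h with h' | h'
        · exact Or.inl h'
        · exact Or.inr h'
      · rintro (h | h)
        · exact le_of_lt h
        · exact le_of_eq h
    have hcard : (univ.filter (fun i : Fin n => ¬ p < b i)).card = B + T := by
      rw [hset, Finset.card_union_of_disjoint]
      rw [Finset.disjoint_filter]
      intro i _ hi hi'
      exact absurd hi' (ne_of_lt hi)
    have := Finset.card_filter_add_card_filter_not
      (s := (univ : Finset (Fin n))) (p := fun i => p < b i)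
    rw [hcard, Finset.card_univ] at this
    simpa using this
  -- real versions
  have h1' : p * n ≤ (A : ℝ) + T := by
    have : ((univ.filter (fun i : Fin n => p ≤ b i)).card : ℝ) = (A : ℝ) + T := by
      rw [hAT]; push_cast; ring
    linarith [h1, this.symm.le, this.le]
  have hBr : (B : ℝ) = n - ((A : ℝ) + T) := by
    have : ((B : ℕ) : ℝ) + ((A : ℝ) + T) = n := by exact_mod_cast congrArg (Nat.cast : ℕ → ℝ) hBn
    linarith
  have hBTr : (B : ℝ) + T = n - A := by
    have : (A : ℝ) + ((B : ℝ) + T) = n := by exact_mod_cast congrArg (Nat.cast : ℕ → ℝ) hABT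
    linarith
  have hsumB : ∑ i, (if b i < p then (1:ℝ) else 0) = (B : ℝ) := by
    rw [sum_ind]; rw [mul_one]
  have hsumA : ∑ i, (if p < b i then (1:ℝ) else 0) = (A : ℝ) := by
    rw [sum_ind]; rw [mul_one]
  rcases le_total ((1-p) * A) (p * B) with hd | hd
  · -- ties invest on the A side
    set a : ℝ := p * B / (1-p) - A with ha
    have ha0 : 0 ≤ a := by
      rw [ha, sub_nonneg, le_div_iff₀ h1p]
      linarith [hd]
    have haT : a ≤ T := by
      rw [ha, sub_le_iff_le_add, div_le_iff₀ h1p]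
      nlinarith [h1']
    set x : ℝ := a / T with hx
    have hx0 : 0 ≤ x := div_nonneg ha0 (Nat.cast_nonneg T)
    have hx1 : x ≤ 1 := by
      rcases Nat.eq_zero_or_pos T with hT0 | hT0
      · rw [hx, hT0]; simp
      · rw [hx, div_le_one (by exact_mod_cast hT0)]
        exact haT
    have hTx : (T : ℝ) * x = a := by
      rcases Nat.eq_zero_or_pos T with hT0 | hT0
      · have ha' : a = 0 := le_antisymm (by rw [hT0] at haT; simpa using haT) ha0
        rw [hT0, ha']; simp
      · rw [hx, mul_div_cancel₀]
        exact Nat.cast_ne_zero.mpr hT0.ne'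
    refine ⟨fun i => if p < b i then 1 else if b i = p then x else 0,
            fun i => if b i < p then 1 else 0, ⟨hp0, hp1⟩, ?_, ?_, ?_, ?_⟩
    · intro i
      refine ⟨⟨?_, ?_⟩, ⟨?_, ?_⟩, ?_⟩
      · by_cases h : p < b i
        · simp [h]
        · by_cases h' : b i = p <;> simp [h, h', hx0]
      · by_cases h : p < b i
        · simp [h]
        · by_cases h' : b i = p <;> simp [h, h', hx1]
      · by_cases h : b i < p <;> simp [h]
      · by_cases h : b i < p <;> simp [h]
      · by_cases h : b i < p
        · have : ¬ p < b i := asymm h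
          simp [h, this, ne_of_lt h]
        · simp [h]
    · have hS1 : ∑ i, (fun i => if p < b i then (1:ℝ) else if b i = p then x else 0) i
          = (A : ℝ) + a := by
        have hpt : ∀ i, (if p < b i then (1:ℝ) else if b i = p then x else 0)
            = (if p < b i then (1:ℝ) else 0) + (if b i = p then x else 0) := by
          intro i
          by_cases h : p < b i
          · simp [h, ne_of_gt h]
          · by_cases h' : b i = p <;> simp [h, h']
        calc ∑ i, (if p < b i then (1:ℝ) else if b i = p then x else 0)
            = ∑ i, ((if p < b i then (1:ℝ) else 0) + (if b i = p then x else 0)) := by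
              exact Finset.sum_congr rfl (fun i _ => hpt i)
          _ = (A : ℝ) + (T : ℝ) * x := by
              rw [Finset.sum_add_distrib, hsumA, sum_ind]
          _ = (A : ℝ) + a := by rw [hTx]
      rw [hS1, hsumB]
      have : (A : ℝ) + a = p * B / (1-p) := by rw [ha]; ring
      rw [this]
      field_simp
    · intro i hi
      constructor
      · simp [hi]
      · simp [not_lt.mpr (le_of_lt hi)]
    · intro i hi
      constructor
      · simp [asymm hi, ne_of_lt hi]
      · simp [hi]
  · -- ties invest on the B side
    set c : ℝ := (1-p) * A / p - B with hc
    have hc0 : 0 ≤ c := by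
      rw [hc, sub_nonneg, le_div_iff₀ hp0]
      linarith [hd]
    have hcT : c ≤ T := by
      rw [hc, sub_le_iff_le_add, div_le_iff₀ hp0]
      nlinarith [h2, hBTr]
    set y : ℝ := c / T with hy
    have hy0 : 0 ≤ y := div_nonneg hc0 (Nat.cast_nonneg T)
    have hy1 : y ≤ 1 := by
      rcases Nat.eq_zero_or_pos T with hT0 | hT0
      · rw [hy, hT0]; simp
      · rw [hy, div_le_one (by exact_mod_cast hT0)]
        exact hcT
    have hTy : (T : ℝ) * y = c := by
      rcases Nat.eq_zero_or_pos T with hT0 | hT0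
      · have hc' : c = 0 := le_antisymm (by rw [hT0] at hcT; simpa using hcT) hc0
        rw [hT0, hc']; simp
      · rw [hy, mul_div_cancel₀]
        exact Nat.cast_ne_zero.mpr hT0.ne'
    refine ⟨fun i => if p < b i then 1 else 0,
            fun i => if b i < p then 1 else if b i = p then y else 0, ⟨hp0, hp1⟩, ?_, ?_, ?_, ?_⟩
    · intro i
      refine ⟨⟨?_, ?_⟩, ⟨?_, ?_⟩, ?_⟩
      · by_cases h : p < b i <;> simp [h]
      · by_cases h : p < b i <;> simp [h]
      · by_cases h : b i < p
        · simp [h]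
        · by_cases h' : b i = p <;> simp [h, h', hy0]
      · by_cases h : b i < p
        · simp [h]
        · by_cases h' : b i = p <;> simp [h, h', hy1]
      · by_cases h : p < b i
        · have : ¬ b i < p := asymm h
          simp [h, this, (ne_of_gt h)]
        · simp [h]
    · have hS2 : ∑ i, (fun i => if b i < p then (1:ℝ) else if b i = p then y else 0) i
          = (B : ℝ) + c := by
        have hpt : ∀ i, (if b i < p then (1:ℝ) else if b i = p then y else 0)
            = (if b i < p then (1:ℝ) else 0) + (if b i = p then y else 0) := by
          intro i
          by_cases h : b i < p
          · simp [h, ne_of_lt h]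
          · by_cases h' : b i = p <;> simp [h, h']
        calc ∑ i, (if b i < p then (1:ℝ) else if b i = p then y else 0)
            = ∑ i, ((if b i < p then (1:ℝ) else 0) + (if b i = p then y else 0)) := by
              exact Finset.sum_congr rfl (fun i _ => hpt i)
          _ = (B : ℝ) + (T : ℝ) * y := by
              rw [Finset.sum_add_distrib, hsumB, sum_ind]
          _ = (B : ℝ) + c := by rw [hTy]
      rw [hS2, hsumA]
      have : (B : ℝ) + c = (1-p) * A / p := by rw [hc]; ring
      rw [this]
      field_simp
    · intro i hi
      constructor
      · simp [hi]
      · simp [not_lt.mpr (le_of_lt hi), (ne_of_gt hi)]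
    · intro i hi
      constructor
      · simp [asymm hi]
      · simp [hi]

lemma cnt_mono {n : ℕ} (b : Fin n → ℝ) {v w : ℝ} (h : v ≤ w) :
    (univ.filter (fun i => w ≤ b i)).card ≤ (univ.filter (fun i => v ≤ b i)).card := by
  classical
  apply Finset.card_le_card
  intro i hi
  simp only [Finset.mem_filter, Finset.mem_univ, true_and] at *
  linarith

theorem naive_equilibrium_exists (n : ℕ) (hn : 0 < n) (b : Fin n → ℝ)
    (hb : ∀ i, b i ∈ Set.Ioo (0 : ℝ) 1) :
    ∃ (sA sB : Fin n → ℝ) (p : ℝ), NaiveEquilibrium n b sA sB p := by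
  classical
  have hn' : (0:ℝ) < n := by exact_mod_cast hn
  set P : ℕ → Prop := fun m => m ≤ (univ.filter (fun i => (m : ℝ) / n ≤ b i)).card with hPdef
  have hP0 : P 0 := Nat.zero_le _
  set k : ℕ := Nat.findGreatest P n with hkdef
  have hPk : P k := Nat.findGreatest_spec (Nat.zero_le n) hP0
  have hkn : k ≤ n := Nat.findGreatest_le n
  have hPn : ¬ P n := by
    rw [hPdef]
    simp only [not_le]
    have hempty : (univ.filter (fun i : Fin n => (n : ℝ) / n ≤ b i)) = ∅ := by
      apply Finset.filter_eq_empty_iff.mpr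
      intro i _
      rw [div_self (ne_of_gt hn')]
      exact not_le.mpr (hb i).2
    rw [hempty]
    simpa using hn
  have hkltn : k < n := lt_of_le_of_ne hkn (fun h => hPn (h ▸ hPk))
  have hnotP : ¬ P (k + 1) :=
    Nat.findGreatest_is_greatest (Nat.lt_succ_of_le le_rfl) (by omega)
  rcases le_or_gt ((univ.filter (fun i => (k : ℝ) / n < b i)).card) k with hcase | hcase
  · -- price k/n works
    have hk1 : 1 ≤ k := by
      by_contra h
      have hk0 : k = 0 := by omega
      rw [hk0] at hcase
      simp only [Nat.cast_zero, zero_div] at hcase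
      have : (univ.filter (fun i : Fin n => (0 : ℝ) < b i)) = univ := by
        apply Finset.filter_eq_self.mpr
        intro i _
        exact (hb i).1
      rw [this, Finset.card_univ, Fintype.card_fin] at hcase
      omega
    set p : ℝ := (k : ℝ) / n with hp
    have hp0 : 0 < p := by
      apply div_pos _ hn'
      exact_mod_cast hk1
    have hp1 : p < 1 := by
      rw [hp, div_lt_one hn']
      exact_mod_cast hkltn
    have hpn : p * n = (k : ℝ) := by
      rw [hp]; field_simp
    obtain ⟨sA, sB, heq⟩ := tie_equilibrium n b p hp0 hp1
      (by rw [hpn]; exact_mod_cast hPk)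
      (by rw [hpn]; exact_mod_cast hcase)
    exact ⟨sA, sB, p, heq⟩
  · -- price is a belief value
    set S : Finset (Fin n) := univ.filter (fun i => (k : ℝ) / n < b i) with hS
    have hSne : S.Nonempty := by
      rw [← Finset.card_pos]; omega
    obtain ⟨i0, hi0S, hi0min⟩ := S.exists_min_image b hSne
    have hi0gt : (k : ℝ) / n < b i0 := by
      rw [hS] at hi0S
      simpa using hi0S
    have hcnt_i0 : k + 1 ≤ (univ.filter (fun i => b i0 ≤ b i)).card := by
      calc k + 1 ≤ S.card := hcase
        _ ≤ (univ.filter (fun i => b i0 ≤ b i)).card := by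
          apply Finset.card_le_card
          intro j hj
          simp only [Finset.mem_filter, Finset.mem_univ, true_and]
          exact hi0min j hj
    set Tset : Finset ℝ := (univ.image b).filter
      (fun w => k + 1 ≤ (univ.filter (fun i => w ≤ b i)).card) with hTset
    have hi0mem : b i0 ∈ Tset := by
      rw [hTset]
      simp only [Finset.mem_filter, Finset.mem_image]
      exact ⟨⟨i0, Finset.mem_univ i0, rfl⟩, hcnt_i0⟩
    have hTne : Tset.Nonempty := ⟨b i0, hi0mem⟩
    set v : ℝ := Tset.max' hTne with hv
    have hvmem : v ∈ Tset := Tset.max'_mem hTne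
    have hvc : k + 1 ≤ (univ.filter (fun i => v ≤ b i)).card := by
      rw [hTset] at hvmem
      exact (Finset.mem_filter.mp hvmem).2
    have hvgt : (k : ℝ) / n < v :=
      lt_of_lt_of_le hi0gt (Finset.le_max' _ _ hi0mem)
    have hvlt : v < ((k : ℝ) + 1) / n := by
      by_contra h
      push_neg at h
      have := le_trans (cnt_mono b h) (show (univ.filter
          (fun i => ((k : ℝ) + 1) / n ≤ b i)).card ≤ k from ?_)
      · omega
      · have := hnotP
        rw [hPdef] at this
        simp only [not_le] at this
        have hcast : (((k + 1 : ℕ) : ℝ)) / n = ((k : ℝ) + 1) / n := by push_cast; ring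
        rw [hcast] at this
        omega
    have hGT : (univ.filter (fun i => v < b i)).card ≤ k := by
      by_contra h
      push_neg at h
      set S' : Finset (Fin n) := univ.filter (fun i => v < b i) with hS'
      have hS'ne : S'.Nonempty := by
        rw [← Finset.card_pos]; omega
      obtain ⟨i1, hi1S, hi1min⟩ := S'.exists_min_image b hS'ne
      have hvlt1 : v < b i1 := by
        rw [hS'] at hi1S
        simpa using hi1S
      have hcnt_i1 : k + 1 ≤ (univ.filter (fun i => b i1 ≤ b i)).card := by
        calc k + 1 ≤ S'.card := h
          _ ≤ (univ.filter (fun i => b i1 ≤ b i)).card := by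
            apply Finset.card_le_card
            intro j hj
            simp only [Finset.mem_filter, Finset.mem_univ, true_and]
            exact hi1min j hj
      have hi1mem : b i1 ∈ Tset := by
        rw [hTset]
        simp only [Finset.mem_filter, Finset.mem_image]
        exact ⟨⟨i1, Finset.mem_univ i1, rfl⟩, hcnt_i1⟩
      exact absurd (Finset.le_max' _ _ hi1mem) (not_le.mpr hvlt1)
    have hkv : (k : ℝ) < v * n := by
      rw [div_lt_iff₀ hn'] at hvgt
      linarith
    have hvk1 : v * n < (k : ℝ) + 1 := by
      rw [lt_div_iff₀ hn'] at hvlt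
      linarith
    have hp0 : 0 < v := lt_of_le_of_lt (by positivity) hvgt
    have hp1 : v < 1 := by
      have hkn' : (k : ℝ) + 1 ≤ n := by exact_mod_cast hkltn
      nlinarith
    obtain ⟨sA, sB, heq⟩ := tie_equilibrium n b v hp0 hp1
      (by
        have : ((k : ℝ) + 1) ≤ ((univ.filter (fun i => v ≤ b i)).card : ℝ) := by
          exact_mod_cast hvc
        linarith)
      (by
        have : ((univ.filter (fun i => v < b i)).card : ℝ) ≤ (k : ℝ) := by
          exact_mod_cast hGT
        linarith)
    exact ⟨sA, sB, v, heq⟩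
end

section
/- Fix a belief profile b ∈ (0,1)^n. If (s^A, s^B) with clearing price p and (t^A, t^B) with clearing price p′ are both naive competitive equilibria for b, then p = p′. In other words, the naive competitive equilibrium price is unique. -/
lemma naive_key (n : ℕ) (hn : 0 < n) (b sA sB tA tB : Fin n → ℝ) (p p' : ℝ)
    (hs : NaiveEquilibrium n b sA sB p) (ht : NaiveEquilibrium n b tA tB p')
    (hlt : p < p') : False := by
  obtain ⟨⟨hp0, hp1⟩, hsbox, hsc, hsA, _⟩ := hs
  obtain ⟨⟨hp'0, hp'1⟩, htbox, htc, _, htB⟩ := ht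
  have hmono : ∀ i, tA i ≤ sA i ∧ sB i ≤ tB i := by
    intro i
    rcases le_or_gt (b i) p with h | h
    · have h2 := htB i (lt_of_le_of_lt h hlt)
      refine ⟨h2.1 ▸ (hsbox i).1.1, h2.2 ▸ (hsbox i).2.1.2⟩
    · have h2 := hsA i h
      refine ⟨h2.1 ▸ (htbox i).1.2, h2.2 ▸ (htbox i).2.1.1⟩
  have h1 : ∑ i, tA i ≤ ∑ i, sA i := Finset.sum_le_sum fun i _ => (hmono i).1
  have h2 : ∑ i, sB i ≤ ∑ i, tB i := Finset.sum_le_sum fun i _ => (hmono i).2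
  have hTAn : 0 ≤ ∑ i, tA i := Finset.sum_nonneg fun i _ => (htbox i).1.1
  have hSBn : 0 ≤ ∑ i, sB i := Finset.sum_nonneg fun i _ => (hsbox i).2.1.1
  have hSAn : 0 ≤ ∑ i, sA i := Finset.sum_nonneg fun i _ => (hsbox i).1.1
  have hTBn : 0 ≤ ∑ i, tB i := Finset.sum_nonneg fun i _ => (htbox i).2.1.1
  have hpne : p ≠ 0 := ne_of_gt hp0
  have hpne1 : (1 : ℝ) - p ≠ 0 := by linarith
  have hp'ne : p' ≠ 0 := ne_of_gt hp'0
  have hp'ne1 : (1 : ℝ) - p' ≠ 0 := by linarith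
  have e1 : (1 - p) * ∑ i, sA i = p * ∑ i, sB i := by
    field_simp at hsc; linear_combination hsc
  have e2 : (1 - p') * ∑ i, tA i = p' * ∑ i, tB i := by
    field_simp at htc; linear_combination htc
  set i0 : Fin n := ⟨0, hn⟩
  rcases le_or_gt (b i0) p with h | h
  · have h3 := (htB i0 (lt_of_le_of_lt h hlt)).2
    have hTB1 : (1 : ℝ) ≤ ∑ i, tB i := by
      calc (1 : ℝ) = tB i0 := h3.symm
        _ ≤ ∑ i, tB i :=
          Finset.single_le_sum (fun i _ => (htbox i).2.1.1) (Finset.mem_univ i0)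
    nlinarith [mul_le_mul_of_nonneg_left h1 (by linarith : (0:ℝ) ≤ 1 - p'),
      mul_le_mul_of_nonneg_left h2 (le_of_lt hp0)]
  · have h3 := (hsA i0 h).1
    have hSA1 : (1 : ℝ) ≤ ∑ i, sA i := by
      calc (1 : ℝ) = sA i0 := h3.symm
        _ ≤ ∑ i, sA i :=
          Finset.single_le_sum (fun i _ => (hsbox i).1.1) (Finset.mem_univ i0)
    nlinarith [mul_le_mul_of_nonneg_left h1 (by linarith : (0:ℝ) ≤ 1 - p'),
      mul_le_mul_of_nonneg_left h2 (le_of_lt hp0)]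

theorem naive_equilibrium_price_unique (n : ℕ) (hn : 0 < n) (b : Fin n → ℝ)
    (hb : ∀ i, b i ∈ Set.Ioo (0 : ℝ) 1)
    (sA sB tA tB : Fin n → ℝ) (p p' : ℝ)
    (hs : NaiveEquilibrium n b sA sB p) (ht : NaiveEquilibrium n b tA tB p') :
    p = p' := by
  rcases lt_trichotomy p p' with h | h | h
  · exact absurd (naive_key n hn b sA sB tA tB p p' hs ht h) id
  · exact h
  · exact absurd (naive_key n hn b tA tB sA sB p' p ht hs h) id
end

section
/- Let b ∈ (0,1)^n be a belief profile and let (s^A, s^B) with price p ∈ (0,1) be a naive competitive equilibrium for b. Then the number of agents i with b_i ≥ p is at least n·p, and the number of agents i with b_i ≤ p is at least n·(1−p). Thus the naive equilibrium price p is the (1−p)-quantile of the belief profile. -/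
/-- The naive equilibrium price is the `(1-p)`-quantile of the belief profile:
at least `n·p` agents have belief `≥ p` and at least `n·(1-p)` agents have
belief `≤ p`. -/
theorem naive_equilibrium_price_quantile (n : ℕ) (b sA sB : Fin n → ℝ) (p : ℝ)
    (hb : ∀ i, b i ∈ Set.Ioo (0 : ℝ) 1)
    (heq : NaiveEquilibrium n b sA sB p) :
    (n : ℝ) * p ≤ ((Finset.univ.filter fun i => p ≤ b i).card : ℝ) ∧
    (n : ℝ) * (1 - p) ≤ ((Finset.univ.filter fun i => b i ≤ p).card : ℝ) := by
  obtain ⟨⟨hp0, hp1⟩, hbox, hclear, hA, hB⟩ := heq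
  have hp0' : p ≠ 0 := ne_of_gt hp0
  have hp1' : (1 : ℝ) - p ≠ 0 := by intro h; nlinarith
  have hclear' : (1 - p) * ∑ i, sA i = p * ∑ i, sB i := by
    field_simp at hclear
    linarith
  constructor
  · have hcard : ((Finset.univ.filter fun i => p ≤ b i).card : ℝ)
        = ∑ i, (if p ≤ b i then (1 : ℝ) else 0) := by
      rw [Finset.card_filter]
      push_cast
      rfl
    rw [hcard]
    have hpt : ∀ i ∈ Finset.univ, (1 - p) * sA i - p * sB i
        ≤ (if p ≤ b i then (1 : ℝ) else 0) - p := by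
      intro i _
      obtain ⟨⟨hA0, hA1⟩, ⟨hB0, hB1⟩, -⟩ := hbox i
      by_cases h : p ≤ b i
      · simp only [h, if_true]
        nlinarith
      · push_neg at h
        obtain ⟨h1, h2⟩ := hB i h
        simp [h1, h2, not_le.mpr h]
    have hsum := Finset.sum_le_sum hpt
    rw [Finset.sum_sub_distrib, Finset.sum_sub_distrib] at hsum
    simp only [Finset.sum_const, Finset.card_univ, Fintype.card_fin, nsmul_eq_mul,
      ← Finset.mul_sum] at hsum
    linarith
  · have hcard : ((Finset.univ.filter fun i => b i ≤ p).card : ℝ)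
        = ∑ i, (if b i ≤ p then (1 : ℝ) else 0) := by
      rw [Finset.card_filter]
      push_cast
      rfl
    rw [hcard]
    have hpt : ∀ i ∈ Finset.univ, p * sB i - (1 - p) * sA i
        ≤ (if b i ≤ p then (1 : ℝ) else 0) - (1 - p) := by
      intro i _
      obtain ⟨⟨hA0, hA1⟩, ⟨hB0, hB1⟩, -⟩ := hbox i
      by_cases h : b i ≤ p
      · simp only [h, if_true]
        nlinarith
      · push_neg at h
        obtain ⟨h1, h2⟩ := hA i h
        simp [h1, h2, not_le.mpr h]
    have hsum := Finset.sum_le_sum hpt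
    rw [Finset.sum_sub_distrib, Finset.sum_sub_distrib] at hsum
    simp only [Finset.sum_const, Finset.card_univ, Fintype.card_fin, nsmul_eq_mul,
      ← Finset.mul_sum] at hsum
    linarith
end

section
/- Let b ∈ (0,1)^n be a belief profile and let p ∈ (0,1) be a Kelly competitive equilibrium price for b, i.e., the Kelly optimal strategies s_i^A = (b_i − p)/(1−p) for those i with b_i > p (and s_i^A = 0 otherwise), s_i^B = (p − b_i)/p for those i with b_i < p (and s_i^B = 0 otherwise) satisfy the market-clearing condition (1/p)·∑_i s_i^A = (1/(1−p))·∑_i s_i^B. Then p = (1/n)·∑_{i=1}^n b_i, the average belief. -/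
/-- Kelly optimal investment in A-securities for an agent with belief `b` at price `p`. -/
noncomputable def kellySA (b p : ℝ) : ℝ := if b > p then (b - p) / (1 - p) else 0

/-- Kelly optimal investment in B-securities for an agent with belief `b` at price `p`. -/
noncomputable def kellySB (b p : ℝ) : ℝ := if b < p then (p - b) / p else 0

/-- In a Kelly market the competitive equilibrium price is the average belief. -/
theorem kelly_equilibrium_price_is_average (n : ℕ) (hn : 0 < n) (b : Fin n → ℝ)
    (hb : ∀ i, b i ∈ Set.Ioo (0 : ℝ) 1) (p : ℝ) (hp : p ∈ Set.Ioo (0 : ℝ) 1)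
    (hclear : (1 / p) * (∑ i, kellySA (b i) p) = (1 / (1 - p)) * (∑ i, kellySB (b i) p)) :
    p = (1 / n) * ∑ i, b i := by
  obtain ⟨hp0, hp1⟩ := hp
  have h1p : (0:ℝ) < 1 - p := by linarith
  have hA : ∀ i, kellySA (b i) p = max (b i - p) 0 / (1 - p) := by
    intro i
    unfold kellySA
    split
    · rw [max_eq_left (by linarith)]
    · rw [max_eq_right (by push_neg at *; linarith), zero_div]
  have hB : ∀ i, kellySB (b i) p = max (p - b i) 0 / p := by
    intro i
    unfold kellySB
    split
    · rw [max_eq_left (by linarith)]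
    · rw [max_eq_right (by push_neg at *; linarith), zero_div]
  simp only [hA, hB, ← Finset.sum_div] at hclear
  have key : ∑ i, max (b i - p) 0 = ∑ i, max (p - b i) 0 := by
    field_simp at hclear
    exact hclear
  have hsum : ∑ i, (b i - p) = 0 := by
    have : ∀ i : Fin n, b i - p = max (b i - p) 0 - max (p - b i) 0 := by
      intro i
      rcases le_total (b i) p with h | h
      · rw [max_eq_right (by linarith), max_eq_left (by linarith)]; ring
      · rw [max_eq_left (by linarith), max_eq_right (by linarith)]; ring
    rw [Finset.sum_congr rfl (fun i _ => this i), Finset.sum_sub_distrib, key, sub_self]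
  rw [Finset.sum_sub_distrib, Finset.sum_const, Finset.card_univ, Fintype.card_fin,
    nsmul_eq_mul, sub_eq_zero] at hsum
  have hn' : (0:ℝ) < n := Nat.cast_pos.mpr hn
  field_simp
  linarith [hsum]
end

section
/- Let b ∈ (0,1)^n be a belief profile. A price p ∈ (0,1) is a Kelly competitive equilibrium price for b (i.e., the Kelly strategies at price p satisfy the market-clearing condition) if and only if p = (1/n)·∑_{i=1}^n b_i. In particular, the Kelly competitive equilibrium price exists and is unique. -/
lemma kelly_diff (b p : ℝ) (hp : 0 < p) (hp1 : p < 1) :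
    (1 / p) * kellySA b p - (1 / (1 - p)) * kellySB b p = (b - p) / (p * (1 - p)) := by
  have h1 : (1 : ℝ) - p ≠ 0 := by linarith
  have h2 : p ≠ 0 := ne_of_gt hp
  unfold kellySA kellySB
  rcases lt_trichotomy b p with h | h | h
  · rw [if_neg (not_lt.2 h.le), if_pos h]
    field_simp
    ring_nf
  · simp [h]
  · rw [if_pos h, if_neg (not_lt.2 h.le)]
    field_simp
    ring

/-- A price `p ∈ (0,1)` is a Kelly competitive equilibrium price iff it is the average
belief; in particular the Kelly competitive equilibrium price exists and is unique. -/
theorem kelly_equilibrium_price_iff_average (n : ℕ) (hn : 0 < n) (b : Fin n → ℝ)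
    (hb : ∀ i, b i ∈ Set.Ioo (0 : ℝ) 1) :
    (∀ p ∈ Set.Ioo (0 : ℝ) 1,
      ((1 / p) * (∑ i, kellySA (b i) p) = (1 / (1 - p)) * (∑ i, kellySB (b i) p) ↔
        p = (1 / n) * ∑ i, b i)) ∧
    (∃! p : ℝ, p ∈ Set.Ioo (0 : ℝ) 1 ∧
      (1 / p) * (∑ i, kellySA (b i) p) = (1 / (1 - p)) * (∑ i, kellySB (b i) p)) := by
  have hn' : (0 : ℝ) < n := Nat.cast_pos.2 hn
  have key : ∀ p ∈ Set.Ioo (0 : ℝ) 1,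
      ((1 / p) * (∑ i, kellySA (b i) p) = (1 / (1 - p)) * (∑ i, kellySB (b i) p) ↔
        p = (1 / n) * ∑ i, b i) := by
    intro p ⟨hp0, hp1⟩
    have hpne : p ≠ 0 := ne_of_gt hp0
    have h1p : (1 : ℝ) - p ≠ 0 := by linarith
    have hsum : (1 / p) * (∑ i, kellySA (b i) p) - (1 / (1 - p)) * (∑ i, kellySB (b i) p)
        = (∑ i, (b i - p)) / (p * (1 - p)) := by
      rw [Finset.mul_sum, Finset.mul_sum, ← Finset.sum_sub_distrib, Finset.sum_div]
      exact Finset.sum_congr rfl fun i _ => kelly_diff (b i) p hp0 hp1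
    constructor
    · intro h
      have h0 : (∑ i, (b i - p)) / (p * (1 - p)) = 0 := by rw [← hsum]; linarith
      have hprod : p * (1 - p) ≠ 0 := mul_ne_zero hpne h1p
      rw [div_eq_zero_iff] at h0
      have hs : (∑ i, (b i - p)) = 0 := h0.resolve_right hprod
      rw [Finset.sum_sub_distrib, Finset.sum_const, Finset.card_fin, nsmul_eq_mul,
        sub_eq_zero] at hs
      field_simp
      linarith [hs]
    · intro h
      have hs : (∑ i, (b i - p)) = 0 := by
        rw [Finset.sum_sub_distrib, Finset.sum_const, Finset.card_fin, nsmul_eq_mul, h]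
        field_simp
        ring
      rw [hs, zero_div] at hsum
      linarith
  have havg : (1 / n) * ∑ i, b i ∈ Set.Ioo (0 : ℝ) 1 := by
    constructor
    · have : (0:ℝ) < ∑ i, b i :=
        Finset.sum_pos (fun i _ => (hb i).1) (Finset.univ_nonempty_iff.2 ⟨⟨0, hn⟩⟩)
      positivity
    · have h1 : (∑ i, b i) < ∑ _i : Fin n, (1:ℝ) :=
        Finset.sum_lt_sum_of_nonempty (Finset.univ_nonempty_iff.2 ⟨⟨0, hn⟩⟩)
          (fun i _ => (hb i).2)
      rw [Finset.sum_const, Finset.card_fin, nsmul_eq_mul, mul_one] at h1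
      rw [div_mul_eq_mul_div, one_mul, div_lt_one hn']
      exact h1
  exact ⟨key, ⟨(1 / n) * ∑ i, b i, ⟨havg, (key _ havg).2 rfl⟩,
    fun q ⟨hq, hclear⟩ => (key q hq).1 hclear⟩⟩
end

section
/- Let b ∈ (0,1)^n be a belief profile with b_i ≠ 1/2 for every i, and let (s^A, s^B) with price p ∈ (0,1) be a naive competitive equilibrium for b. Then: p > 1/2 if and only if the number of agents i with b_i > 1/2 is strictly greater than n/2; p < 1/2 if and only if that number is strictly less than n/2; and p = 1/2 if and only if exactly n/2 agents have b_i > 1/2. In other words, the binarized naive equilibrium price coincides with the outcome of simple majority voting on the binarized beliefs. -/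
/-- The binarized naive equilibrium price coincides with the outcome of simple
majority voting on the binarized beliefs. -/
theorem naive_equilibrium_simple_majority (n : ℕ) (hn : 0 < n)
    (b sA sB : Fin n → ℝ) (p : ℝ)
    (hb : ∀ i, b i ∈ Set.Ioo (0 : ℝ) 1) (hbh : ∀ i, b i ≠ 1 / 2)
    (heq : NaiveEquilibrium n b sA sB p) :
    (p > 1 / 2 ↔ ((Finset.univ.filter fun i => b i > 1 / 2).card : ℝ) > n / 2) ∧
    (p < 1 / 2 ↔ ((Finset.univ.filter fun i => b i > 1 / 2).card : ℝ) < n / 2) ∧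
    (p = 1 / 2 ↔ ((Finset.univ.filter fun i => b i > 1 / 2).card : ℝ) = n / 2) := by
  obtain ⟨⟨hp0, hp1⟩, hs, hclear, hA, hB⟩ := heq
  have hp1' : (0:ℝ) < 1 - p := by linarith
  have hclear' : (1 - p) * (∑ i, sA i) = p * (∑ i, sB i) := by
    have h1 : p ≠ 0 := ne_of_gt hp0
    have h2 : (1:ℝ) - p ≠ 0 := ne_of_gt hp1'
    field_simp at hclear
    linarith [hclear]
  set S := Finset.univ.filter (fun i => b i > 1/2) with hS
  set T := Finset.univ.filter (fun i => ¬ b i > 1/2) with hT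
  have hTS : ∀ i ∈ T, b i < 1/2 := by
    intro i hi
    simp only [hT, Finset.mem_filter] at hi
    rcases lt_or_gt_of_ne (hbh i) with h | h
    · exact h
    · exact absurd h hi.2
  have hSS : ∀ i ∈ S, b i > 1/2 := by
    intro i hi
    simp only [hS, Finset.mem_filter] at hi
    exact hi.2
  have hcard : (S.card : ℝ) + (T.card : ℝ) = n := by
    have := Finset.card_filter_add_card_filter_not
      (s := (Finset.univ : Finset (Fin n))) (p := fun i => b i > 1/2)
    rw [Finset.card_univ, Fintype.card_fin] at this
    exact_mod_cast this
  have hsplitA : ∑ i, sA i = ∑ i ∈ S, sA i + ∑ i ∈ T, sA i :=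
    (Finset.sum_filter_add_sum_filter_not Finset.univ _ sA).symm
  have hsplitB : ∑ i, sB i = ∑ i ∈ S, sB i + ∑ i ∈ T, sB i :=
    (Finset.sum_filter_add_sum_filter_not Finset.univ _ sB).symm
  -- forward direction: p > 1/2
  have key1 : p > 1/2 → (S.card : ℝ) > n/2 := by
    intro hp
    have hAsum : ∑ i, sA i ≤ (S.card : ℝ) := by
      rw [hsplitA]
      have h1 : ∑ i ∈ T, sA i = 0 :=
        Finset.sum_eq_zero fun i hi => (hB i (by linarith [hTS i hi])).1
      have h2 : ∑ i ∈ S, sA i ≤ (S.card : ℝ) := by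
        calc ∑ i ∈ S, sA i ≤ ∑ _i ∈ S, (1:ℝ) :=
              Finset.sum_le_sum fun i _ => (hs i).1.2
          _ = S.card := by simp
      linarith
    have hBsum : (T.card : ℝ) ≤ ∑ i, sB i := by
      rw [hsplitB]
      have h1 : ∑ i ∈ T, sB i = (T.card : ℝ) := by
        rw [Finset.sum_congr rfl fun i hi => (hB i (by linarith [hTS i hi])).2]
        simp
      have h2 : (0:ℝ) ≤ ∑ i ∈ S, sB i :=
        Finset.sum_nonneg fun i _ => (hs i).2.1.1
      linarith
    have hkey : p * (T.card : ℝ) ≤ (1 - p) * (S.card : ℝ) := by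
      calc p * (T.card : ℝ) ≤ p * ∑ i, sB i := by
            exact mul_le_mul_of_nonneg_left hBsum (le_of_lt hp0)
        _ = (1 - p) * ∑ i, sA i := hclear'.symm
        _ ≤ (1 - p) * (S.card : ℝ) := mul_le_mul_of_nonneg_left hAsum (le_of_lt hp1')
    have hn' : (0:ℝ) < n := by exact_mod_cast hn
    nlinarith [hkey, hcard]
  -- forward direction: p < 1/2
  have key2 : p < 1/2 → (S.card : ℝ) < n/2 := by
    intro hp
    have hBsum : ∑ i, sB i ≤ (T.card : ℝ) := by
      rw [hsplitB]
      have h1 : ∑ i ∈ S, sB i = 0 :=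
        Finset.sum_eq_zero fun i hi => (hA i (by linarith [hSS i hi])).2
      have h2 : ∑ i ∈ T, sB i ≤ (T.card : ℝ) := by
        calc ∑ i ∈ T, sB i ≤ ∑ _i ∈ T, (1:ℝ) :=
              Finset.sum_le_sum fun i _ => (hs i).2.1.2
          _ = T.card := by simp
      linarith
    have hAsum : (S.card : ℝ) ≤ ∑ i, sA i := by
      rw [hsplitA]
      have h1 : ∑ i ∈ S, sA i = (S.card : ℝ) := by
        rw [Finset.sum_congr rfl fun i hi => (hA i (by linarith [hSS i hi])).1]
        simp
      have h2 : (0:ℝ) ≤ ∑ i ∈ T, sA i :=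
        Finset.sum_nonneg fun i _ => (hs i).1.1
      linarith
    have hkey : (1 - p) * (S.card : ℝ) ≤ p * (T.card : ℝ) := by
      calc (1 - p) * (S.card : ℝ) ≤ (1 - p) * ∑ i, sA i :=
            mul_le_mul_of_nonneg_left hAsum (le_of_lt hp1')
        _ = p * ∑ i, sB i := hclear'
        _ ≤ p * (T.card : ℝ) := mul_le_mul_of_nonneg_left hBsum (le_of_lt hp0)
    have hn' : (0:ℝ) < n := by exact_mod_cast hn
    nlinarith [hkey, hcard]
  -- forward direction: p = 1/2
  have key3 : p = 1/2 → (S.card : ℝ) = n/2 := by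
    intro hp
    have hAsum : ∑ i, sA i = (S.card : ℝ) := by
      rw [hsplitA]
      have h1 : ∑ i ∈ T, sA i = 0 :=
        Finset.sum_eq_zero fun i hi => (hB i (by rw [hp]; exact hTS i hi)).1
      have h2 : ∑ i ∈ S, sA i = (S.card : ℝ) := by
        rw [Finset.sum_congr rfl fun i hi => (hA i (by rw [hp]; exact hSS i hi)).1]
        simp
      linarith
    have hBsum : ∑ i, sB i = (T.card : ℝ) := by
      rw [hsplitB]
      have h1 : ∑ i ∈ S, sB i = 0 :=
        Finset.sum_eq_zero fun i hi => (hA i (by rw [hp]; exact hSS i hi)).2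
      have h2 : ∑ i ∈ T, sB i = (T.card : ℝ) := by
        rw [Finset.sum_congr rfl fun i hi => (hB i (by rw [hp]; exact hTS i hi)).2]
        simp
      linarith
    have : (1 - p) * (S.card : ℝ) = p * (T.card : ℝ) := by
      rw [← hAsum, ← hBsum]; exact hclear'
    rw [hp] at this
    nlinarith [this, hcard]
  refine ⟨⟨key1, ?_⟩, ⟨key2, ?_⟩, ⟨key3, ?_⟩⟩
  · intro h
    rcases lt_trichotomy p (1/2) with hc | hc | hc
    · linarith [key2 hc]
    · linarith [key3 hc]
    · exact hc
  · intro h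
    rcases lt_trichotomy p (1/2) with hc | hc | hc
    · exact hc
    · linarith [key3 hc]
    · linarith [key1 hc]
  · intro h
    rcases lt_trichotomy p (1/2) with hc | hc | hc
    · linarith [key2 hc]
    · exact hc
    · linarith [key1 hc]
end

section
/- Let q ∈ (1/2, 1)^n be a competence profile, v ∈ {0,1}^n a vote profile, b the induced belief profile b_i = v_i·q_i + (1−v_i)·(1−q_i), and let p ∈ (0,1) be a Kelly competitive equilibrium price for b. Set w_i = 2q_i − 1. Then p > 1/2 if and only if ∑_i w_i v_i > (1/2)∑_i w_i; p < 1/2 if and only if ∑_i w_i v_i < (1/2)∑_i w_i; and p = 1/2 if and only if ∑_i w_i v_i = (1/2)∑_i w_i. In other words, the binarized Kelly equilibrium price coincides with the outcome of weighted majority voting with weights proportional to 2q_i − 1. -/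
/-- The binarized Kelly equilibrium price coincides with the outcome of weighted
majority voting with weights `w i = 2 * q i - 1`. -/
theorem kelly_equilibrium_weighted_majority (n : ℕ) (hn : 0 < n)
    (q v b w : Fin n → ℝ)
    (hq : ∀ i, q i ∈ Set.Ioo (1 / 2 : ℝ) 1)
    (hv : ∀ i, v i = 0 ∨ v i = 1)
    (hbdef : ∀ i, b i = v i * q i + (1 - v i) * (1 - q i))
    (hw : ∀ i, w i = 2 * q i - 1)
    (p : ℝ) (hp : p ∈ Set.Ioo (0 : ℝ) 1)
    (hclear : (1 / p) * (∑ i, kellySA (b i) p) = (1 / (1 - p)) * (∑ i, kellySB (b i) p)) :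
    (p > 1 / 2 ↔ ∑ i, w i * v i > (1 / 2) * ∑ i, w i) ∧
    (p < 1 / 2 ↔ ∑ i, w i * v i < (1 / 2) * ∑ i, w i) ∧
    (p = 1 / 2 ↔ ∑ i, w i * v i = (1 / 2) * ∑ i, w i) := by
  obtain ⟨hp0, hp1⟩ := hp
  have hpne : p ≠ 0 := ne_of_gt hp0
  have h1pne : (1 : ℝ) - p ≠ 0 := by linarith
  -- pointwise excess demand
  have hterm : ∀ i, (1 / p) * kellySA (b i) p - (1 / (1 - p)) * kellySB (b i) p
      = (b i - p) / (p * (1 - p)) := by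
    intro i
    unfold kellySA kellySB
    rcases lt_trichotomy (b i) p with h | h | h
    · rw [if_neg (by linarith), if_pos h]
      field_simp
      try ring
      try exact Or.inl trivial
    · rw [if_neg (by linarith), if_neg (by linarith)]
      simp [h]
    · rw [if_pos h, if_neg (by linarith)]
      field_simp
      try ring
      try exact Or.inl trivial
  -- market clearing ⇒ p is the mean belief
  have hbsum : ∑ i, b i = n * p := by
    have h1 : ∑ i, ((1 / p) * kellySA (b i) p - (1 / (1 - p)) * kellySB (b i) p) = 0 := by
      rw [Finset.sum_sub_distrib, ← Finset.mul_sum, ← Finset.mul_sum]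
      linarith [hclear]
    have h2 : ∑ i, (b i - p) / (p * (1 - p)) = 0 := by
      rw [← h1]; exact Finset.sum_congr rfl fun i _ => (hterm i).symm
    have h3 : (∑ i, (b i - p)) / (p * (1 - p)) = 0 := by
      rw [Finset.sum_div]; exact h2
    have hpne2 : p * (1 - p) ≠ 0 := mul_ne_zero hpne h1pne
    field_simp at h3
    rw [mul_zero, Finset.sum_sub_distrib] at h3
    simp only [Finset.sum_const, Finset.card_univ, Fintype.card_fin, nsmul_eq_mul] at h3
    linarith [h3]
  -- weighted majority margin equals sum of (b i - 1/2)
  have hmargin : ∑ i, w i * v i - (1 / 2) * ∑ i, w i = ∑ i, (b i - 1 / 2) := by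
    rw [Finset.mul_sum, ← Finset.sum_sub_distrib]
    refine Finset.sum_congr rfl fun i _ => ?_
    rcases hv i with h | h <;> rw [hw i, hbdef i, h] <;> ring
  have hkey : ∑ i, w i * v i - (1 / 2) * ∑ i, w i = n * (p - 1 / 2) := by
    rw [hmargin, Finset.sum_sub_distrib]
    simp [hbsum]
    ring
  have hn' : (0 : ℝ) < n := by exact_mod_cast hn
  refine ⟨⟨fun h => ?_, fun h => ?_⟩, ⟨fun h => ?_, fun h => ?_⟩, ⟨fun h => ?_, fun h => ?_⟩⟩ <;>
    nlinarith [hkey, hn']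
end

section
/- Fix p ∈ (0,1) and b ∈ (p,1) with b < 1, and set y* = ln( ((1−p)/p) · (b/(1−b)) ). Suppose for every k > 0 we are given y_k ∈ [0, k) satisfying the first-order condition of the taxed Kelly utility, namely (k·b·e^{−y_k}) / (k·p/(1−p) + 1 − e^{−y_k}) = (1−b)/(1 − y_k/k), and suppose the family (y_k)_{k>0} is bounded. Then y_k → y* as k → ∞. Equivalently, writing s_k = y_k/k for the corresponding investment fraction, k·s_k converges to ln( ((1−p)/p) · (b/(1−b)) ). -/
/-- Any bounded family of solutions of the first-order condition of the taxed Kelly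
utility converges, as the taxation parameter `k → ∞`, to
`ln( ((1-p)/p) · (b/(1-b)) )`. -/
theorem taxed_foc_limit (p b : ℝ) (hp : p ∈ Set.Ioo (0 : ℝ) 1)
    (hb : b ∈ Set.Ioo p 1) (hb1 : b < 1) (y : ℝ → ℝ)
    (hy : ∀ k > (0 : ℝ), y k ∈ Set.Ico (0 : ℝ) k ∧
      (k * b * Real.exp (-(y k))) / (k * p / (1 - p) + 1 - Real.exp (-(y k)))
        = (1 - b) / (1 - y k / k))
    (hbdd : ∃ M : ℝ, ∀ k > (0 : ℝ), |y k| ≤ M) :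
    Filter.Tendsto y Filter.atTop
      (nhds (Real.log ((1 - p) / p * (b / (1 - b))))) := by
  obtain ⟨hp0, hp1⟩ := hp
  obtain ⟨hpb, hbb⟩ := hb
  have hb0 : 0 < b := hp0.trans hpb
  have h1b : 0 < 1 - b := by linarith
  have h1p : 0 < 1 - p := by linarith
  obtain ⟨M, hM⟩ := hbdd
  set L : ℝ := (1 - b) * (p / (1 - p)) / b with hLdef
  have hL0 : 0 < L := by positivity
  -- explicit formula for exp(-(y k))
  have key : ∀ k > (0 : ℝ), Real.exp (-(y k)) =
      (1 - b) * (k * p / (1 - p) + 1) / (b * (k - y k) + (1 - b)) := by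
    intro k hk
    obtain ⟨⟨hy0, hyk⟩, heq⟩ := hy k hk
    have hE1 : Real.exp (-(y k)) ≤ 1 := Real.exp_le_one_iff.2 (by linarith)
    have hkp : 0 < k * p / (1 - p) := by positivity
    have hD1 : (0:ℝ) < k * p / (1 - p) + 1 - Real.exp (-(y k)) := by linarith
    have hD2 : (0:ℝ) < 1 - y k / k := by
      have : y k / k < 1 := (div_lt_one hk).2 hyk
      linarith
    have hden : (0:ℝ) < b * (k - y k) + (1 - b) := by nlinarith
    have hmul := (div_eq_div_iff hD1.ne' hD2.ne').1 heq
    rw [eq_div_iff hden.ne']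
    have hk' : k ≠ 0 := hk.ne'
    field_simp at hmul ⊢
    nlinarith [hmul]
  -- y k / k → 0
  have hMk : Filter.Tendsto (fun k : ℝ => M / k) Filter.atTop (nhds 0) :=
    Filter.Tendsto.div_atTop tendsto_const_nhds Filter.tendsto_id
  have hyk0 : Filter.Tendsto (fun k => y k / k) Filter.atTop (nhds 0) := by
    refine squeeze_zero_norm' ?_ hMk
    filter_upwards [Filter.eventually_gt_atTop (0:ℝ)] with k hk
    rw [Real.norm_eq_abs, abs_div, abs_of_pos hk]
    gcongr
    exact hM k hk
  -- 1/k → 0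
  have hinv : Filter.Tendsto (fun k : ℝ => 1 / k) Filter.atTop (nhds 0) := by
    simpa [one_div] using tendsto_inv_atTop_zero (𝕜 := ℝ)
  -- limit of the explicit formula
  have hnum : Filter.Tendsto (fun k : ℝ => (1 - b) * (p / (1 - p) + 1 / k))
      Filter.atTop (nhds ((1 - b) * (p / (1 - p)))) := by
    have := (tendsto_const_nhds (x := p / (1 - p)) (f := Filter.atTop (α := ℝ))).add hinv
    simpa using (tendsto_const_nhds.mul this)
  have hden : Filter.Tendsto (fun k : ℝ => b * (1 - y k / k) + (1 - b) * (1 / k))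
      Filter.atTop (nhds b) := by
    have h1 : Filter.Tendsto (fun k : ℝ => b * (1 - y k / k)) Filter.atTop (nhds b) := by
      have := (tendsto_const_nhds (x := (1:ℝ)) (f := Filter.atTop (α := ℝ))).sub hyk0
      simpa using tendsto_const_nhds.mul this
    have h2 := (tendsto_const_nhds (x := 1 - b) (f := Filter.atTop (α := ℝ))).mul hinv
    simpa using h1.add h2
  have hf : Filter.Tendsto
      (fun k : ℝ => (1 - b) * (p / (1 - p) + 1 / k) / (b * (1 - y k / k) + (1 - b) * (1 / k)))
      Filter.atTop (nhds L) := by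
    simpa [hLdef, Pi.div_def] using hnum.div hden hb0.ne'
  have hE : Filter.Tendsto (fun k => Real.exp (-(y k))) Filter.atTop (nhds L) := by
    apply hf.congr'
    filter_upwards [Filter.eventually_gt_atTop (0:ℝ)] with k hk
    rw [key k hk]
    obtain ⟨⟨hy0, hyk⟩, -⟩ := hy k hk
    have hk' : k ≠ 0 := hk.ne'
    have hd1 : (0:ℝ) < b * (k - y k) + (1 - b) := by nlinarith
    have hd2 : (0:ℝ) < b * (1 - y k / k) + (1 - b) * (1 / k) := by
      have heq2 : b * (1 - y k / k) + (1 - b) * (1 / k) = (b * (k - y k) + (1 - b)) / k := by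
        field_simp
      rw [heq2]; positivity
    rw [div_eq_div_iff hd2.ne' hd1.ne']
    field_simp
    try ring
    try tauto
  have hlog : Filter.Tendsto (fun k => Real.log (Real.exp (-(y k)))) Filter.atTop
      (nhds (Real.log L)) := (Real.continuousAt_log hL0.ne').tendsto.comp hE
  have hneg : Filter.Tendsto (fun k => -Real.log (Real.exp (-(y k)))) Filter.atTop
      (nhds (-Real.log L)) := hlog.neg
  have hfinal : Filter.Tendsto y Filter.atTop (nhds (-Real.log L)) := by
    refine hneg.congr (fun k => ?_)
    rw [Real.log_exp]; ring
  have : -Real.log L = Real.log ((1 - p) / p * (b / (1 - b))) := by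
    rw [← Real.log_inv]
    congr 1
    rw [hLdef]
    field_simp
  rwa [this] at hfinal
end

section
/- Let q ∈ (1/2, 1)^n be a competence profile, v ∈ {0,1}^n a vote profile, and let b be the induced belief profile b_i = v_i·q_i + (1−v_i)·(1−q_i). Let p* ∈ (0,1) be the unique solution of ln(p*/(1−p*)) = (1/n)·∑_{i=1}^n ln(b_i/(1−b_i)), and set w_i = ln(q_i/(1−q_i)). Then p* > 1/2 if and only if ∑_i w_i v_i > (1/2)∑_i w_i; p* < 1/2 if and only if ∑_i w_i v_i < (1/2)∑_i w_i; and p* = 1/2 if and only if ∑_i w_i v_i = (1/2)∑_i w_i. In other words, binarizing p* yields exactly the outcome of weighted majority voting with the log-odds weights w_i = ln(q_i/(1−q_i)). -/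
/-- Binarizing the asymptotic taxed-market equilibrium price `p*`, characterized by
`ln(p*/(1-p*)) = (1/n) ∑ᵢ ln(bᵢ/(1-bᵢ))`, yields exactly the outcome of weighted
majority voting with the log-odds weights `w i = ln(q i/(1-q i))`. -/
theorem taxed_price_log_odds_majority (n : ℕ) (q v b w : Fin n → ℝ)
    (hq : ∀ i, q i ∈ Set.Ioo (1 / 2 : ℝ) 1)
    (hv : ∀ i, v i = 0 ∨ v i = 1)
    (hbdef : ∀ i, b i = v i * q i + (1 - v i) * (1 - q i))
    (hw : ∀ i, w i = Real.log (q i / (1 - q i)))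
    (p : ℝ) (hp : p ∈ Set.Ioo (0 : ℝ) 1)
    (hpstar : Real.log (p / (1 - p)) = (1 / n) * ∑ i, Real.log (b i / (1 - b i))) :
    (p > 1 / 2 ↔ ∑ i, w i * v i > (1 / 2) * ∑ i, w i) ∧
    (p < 1 / 2 ↔ ∑ i, w i * v i < (1 / 2) * ∑ i, w i) ∧
    (p = 1 / 2 ↔ ∑ i, w i * v i = (1 / 2) * ∑ i, w i) := by
  obtain ⟨hp0, hp1⟩ := hp
  have h1p : (0:ℝ) < 1 - p := by linarith
  have hpq : (0:ℝ) < p / (1 - p) := div_pos hp0 h1p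
  -- summand identity : log(bᵢ/(1-bᵢ)) = 2 wᵢ vᵢ - wᵢ
  have hterm : ∀ i, Real.log (b i / (1 - b i)) = 2 * (w i * v i) - w i := by
    intro i
    rcases hv i with h | h
    · have hb : b i = 1 - q i := by rw [hbdef i, h]; ring
      rw [hb, h, hw i]
      have : (1 - q i) / (1 - (1 - q i)) = (q i / (1 - q i))⁻¹ := by
        rw [inv_div]; ring_nf
      rw [this, Real.log_inv]; ring
    · have hb : b i = q i := by rw [hbdef i, h]; ring
      rw [hb, h, hw i]; ring
  have hsum : ∑ i, Real.log (b i / (1 - b i))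
      = 2 * ((∑ i, w i * v i) - (1/2) * ∑ i, w i) := by
    simp only [hterm]
    rw [Finset.sum_sub_distrib, ← Finset.mul_sum]
    ring
  -- sign of log(p/(1-p)) vs p - 1/2
  have hlogpos : Real.log (p / (1 - p)) > 0 ↔ p > 1/2 := by
    rw [show (Real.log (p / (1 - p)) > 0) = (0 < Real.log (p / (1 - p))) from rfl,
      Real.log_pos_iff hpq.le, lt_div_iff₀ h1p]
    constructor <;> intro <;> linarith
  have hlogneg : Real.log (p / (1 - p)) < 0 ↔ p < 1/2 := by
    rw [Real.log_neg_iff hpq, div_lt_one h1p]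
    constructor <;> intro <;> linarith
  have hlogzero : Real.log (p / (1 - p)) = 0 ↔ p = 1/2 := by
    constructor
    · intro h
      rcases Real.log_eq_zero.mp h with h' | h' | h'
      · linarith
      · field_simp at h'; linarith
      · linarith
    · intro h; rw [h]; norm_num
  rcases Nat.eq_zero_or_pos n with hn | hn
  · subst hn
    have hpz : p = 1/2 := hlogzero.mp (by simpa using hpstar)
    simp [hpz]
  · have hc : (0:ℝ) < 2 / n := by positivity
    have h2 : Real.log (p / (1 - p))
        = (2 / n) * ((∑ i, w i * v i) - (1/2) * ∑ i, w i) := by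
      rw [hpstar, hsum]; ring
    have hcne : (2 / (n:ℝ)) ≠ 0 := ne_of_gt hc
    refine ⟨?_, ?_, ?_⟩
    · rw [← hlogpos, h2]
      constructor <;> intro h
      · nlinarith
      · nlinarith
    · rw [← hlogneg, h2]
      constructor <;> intro h
      · nlinarith
      · nlinarith
    · rw [← hlogzero, h2]
      constructor <;> intro h
      · rcases mul_eq_zero.mp h with h' | h'
        · exact absurd h' hcne
        · linarith
      · rw [show (∑ i, w i * v i) - (1/2) * ∑ i, w i = 0 by linarith]
        ring
end

section
/- Let q ∈ (1/2, 1)^n. For a weight vector w ∈ ℝ^n, define the accuracy Q(w) = (1/2)·∑_{v ∈ {0,1}^n} [ P_A(v)·g_w(v) + P_B(v)·(1 − g_w(v)) ], where P_A(v) = ∏_{i=1}^n q_i^{v_i}(1−q_i)^{1−v_i} and P_B(v) = ∏_{i=1}^n q_i^{1−v_i}(1−q_i)^{v_i} are the probabilities of the vote profile v conditional on the true state being A and B respectively, and g_w(v) equals 1 if ∑_i w_i v_i > (1/2)∑_i w_i, equals 1/2 if ∑_i w_i v_i = (1/2)∑_i w_i, and equals 0 otherwise. Then the weight vector w* with w*_i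 = ln(q_i/(1−q_i)) maximizes Q: for every w ∈ ℝ^n, Q(w*) ≥ Q(w). -/
open Finset

/-- Probability of the vote profile `v` conditional on the true state being `A`. -/
noncomputable def probA (n : ℕ) (q : Fin n → ℝ) (v : Fin n → Bool) : ℝ :=
  ∏ i, if v i then q i else 1 - q i

/-- Probability of the vote profile `v` conditional on the true state being `B`. -/
noncomputable def probB (n : ℕ) (q : Fin n → ℝ) (v : Fin n → Bool) : ℝ :=
  ∏ i, if v i then 1 - q i else q i

/-- Outcome of weighted majority with weights `w` on the vote profile `v`:
`1` if `A` wins, `1/2` on a tie, `0` if `B` wins. -/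
noncomputable def wmaj (n : ℕ) (w : Fin n → ℝ) (v : Fin n → Bool) : ℝ :=
  if (∑ i, w i * (if v i then 1 else 0)) > (1 / 2) * ∑ i, w i then 1
  else if (∑ i, w i * (if v i then 1 else 0)) = (1 / 2) * ∑ i, w i then 1 / 2
  else 0

/-- Truth-tracking accuracy of weighted majority with weights `w`, under the uniform
prior on the two states. -/
noncomputable def accuracy (n : ℕ) (q : Fin n → ℝ) (w : Fin n → ℝ) : ℝ :=
  (1 / 2) * ∑ v : Fin n → Bool,
    (probA n q v * wmaj n w v + probB n q v * (1 - wmaj n w v))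

lemma probA_pos (n : ℕ) (q : Fin n → ℝ) (hq : ∀ i, q i ∈ Set.Ioo (1 / 2 : ℝ) 1)
    (v : Fin n → Bool) : 0 < probA n q v := by
  refine Finset.prod_pos fun i _ => ?_
  obtain ⟨h1, h2⟩ := hq i
  split <;> linarith

lemma probB_pos (n : ℕ) (q : Fin n → ℝ) (hq : ∀ i, q i ∈ Set.Ioo (1 / 2 : ℝ) 1)
    (v : Fin n → Bool) : 0 < probB n q v := by
  refine Finset.prod_pos fun i _ => ?_
  obtain ⟨h1, h2⟩ := hq i
  split <;> linarith

lemma key (n : ℕ) (q : Fin n → ℝ) (hq : ∀ i, q i ∈ Set.Ioo (1 / 2 : ℝ) 1)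
    (v : Fin n → Bool) :
    Real.log (probA n q v) - Real.log (probB n q v)
      = 2 * ((∑ i, Real.log (q i / (1 - q i)) * (if v i then 1 else 0))
             - (1 / 2) * ∑ i, Real.log (q i / (1 - q i))) := by
  have hpos : ∀ i : Fin n, 0 < q i ∧ 0 < 1 - q i := fun i => by
    obtain ⟨h1, h2⟩ := hq i; constructor <;> linarith
  have hA : Real.log (probA n q v) = ∑ i, Real.log (if v i then q i else 1 - q i) := by
    rw [probA, Real.log_prod]
    intro i _
    rcases hpos i with ⟨h1, h2⟩
    split <;> positivity
  have hB : Real.log (probB n q v) = ∑ i, Real.log (if v i then 1 - q i else q i) := by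
    rw [probB, Real.log_prod]
    intro i _
    rcases hpos i with ⟨h1, h2⟩
    split <;> positivity
  rw [hA, hB, ← Finset.sum_sub_distrib, Finset.mul_sum, ← Finset.sum_sub_distrib,
    Finset.mul_sum]
  refine Finset.sum_congr rfl fun i _ => ?_
  rcases hpos i with ⟨h1, h2⟩
  rw [Real.log_div (ne_of_gt h1) (ne_of_gt h2)]
  split <;> ring

/-- Weighted majority with the log-odds weights `ln(q i / (1 - q i))` maximizes the
truth-tracking accuracy (Grofman–Owen–Feld / Nitzan–Paroush). -/
theorem log_odds_weights_optimal (n : ℕ) (q : Fin n → ℝ)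
    (hq : ∀ i, q i ∈ Set.Ioo (1 / 2 : ℝ) 1) (w : Fin n → ℝ) :
    accuracy n q w ≤ accuracy n q (fun i => Real.log (q i / (1 - q i))) := by
  unfold accuracy
  refine mul_le_mul_of_nonneg_left (Finset.sum_le_sum fun v _ => ?_) (by norm_num)
  set a := probA n q v with ha
  set b := probB n q v with hb
  have hapos := probA_pos n q hq v
  have hbpos := probB_pos n q hq v
  have hg : 0 ≤ wmaj n w v ∧ wmaj n w v ≤ 1 := by
    unfold wmaj; split
    · norm_num
    · split <;> norm_num
  set S := (∑ i, Real.log (q i / (1 - q i)) * (if v i then 1 else 0))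
      - (1 / 2) * ∑ i, Real.log (q i / (1 - q i)) with hS
  have hkey := key n q hq v
  rcases lt_trichotomy a b with hab | hab | hab
  · have hlt : Real.log a < Real.log b := Real.log_lt_log hapos hab
    have hSneg : S < 0 := by rw [hS]; nlinarith [hkey]
    have : wmaj n (fun i => Real.log (q i / (1 - q i))) v = 0 := by
      unfold wmaj
      rw [if_neg (by simp only [← hS]; intro h; linarith [sub_pos.mpr h]),
        if_neg (by simp only [← hS]; intro h; rw [← sub_eq_zero] at h; simp [hS, h] at hSneg; linarith)]
    rw [this]
    nlinarith [hg.1, hg.2]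
  · rw [hab]
    have h1 : b * wmaj n w v + b * (1 - wmaj n w v) = b := by ring
    have h2 : b * wmaj n (fun i => Real.log (q i / (1 - q i))) v
        + b * (1 - wmaj n (fun i => Real.log (q i / (1 - q i))) v) = b := by ring
    linarith
  · have hlt : Real.log b < Real.log a := Real.log_lt_log hbpos hab
    have hSpos : 0 < S := by rw [hS]; nlinarith [hkey]
    have : wmaj n (fun i => Real.log (q i / (1 - q i))) v = 1 := by
      unfold wmaj
      rw [if_pos (by simp only [← hS] at hSpos ⊢; linarith [sub_pos.mp hSpos])]
    rw [this]
    nlinarith [hg.1, hg.2]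
end
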